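/- Let Γ(t), 0 ≤ t ≤ T, be a sufficiently smooth moving boundary in ℝ², σ a continuous density on the space-time boundary Γ_T, and δ > 0. Then for t ≥ δ and all x ∈ ℝ², the history part of the single layer heat potential satisfies S_H[σ](x, t+δ) := ∫₀^{t} ∫_{Γ(τ)} G(x−y, t+δ−τ) σ(y,τ) ds_y dτ = ∫_{ℝ²} G(x−y, δ) S[σ](y, t) dy; that is, the history part at time t+δ is the Gaussian convolution (with variance parameter δ) of the full single layer potential at time t. -/

import Mathlib

noncomputable section

open MeasureTheory Filter Topology

/-- The plane `ℝ²`. -/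
abbrev E2 : Type := EuclideanSpace ℝ (Fin 2)

/-- The free-space heat kernel in two space dimensions,
`G(x,t) = e^{−‖x‖²/(4t)}/(4πt)`. -/
def heatKernel (x : E2) (t : ℝ) : ℝ :=
  Real.exp (-‖x‖ ^ 2 / (4 * t)) / (4 * Real.pi * t)

/-- A *sufficiently smooth moving boundary* in the plane: for every time `t`,
`Γ(t) = frontier (Ω t)` is the boundary of a bounded open domain `Ω t`; it is a
closed `C²` curve (hence with continuous curvature), parametrized by arc length
by `γ t : ℝ → ℝ²` (periodic with period the length of the curve), jointly
continuous in space-time and evolving with a continuous velocity, with outward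
unit normal `ν t y` at `y ∈ Γ(t)`. -/
structure SmoothMovingBoundary where
  /-- the moving domain -/
  Ω : ℝ → Set E2
  /-- arc-length parametrization of `Γ(t) = frontier (Ω t)` -/
  γ : ℝ → ℝ → E2
  /-- the length of the curve `Γ(t)` -/
  len : ℝ → ℝ
  /-- outward unit normal to `Γ(t)` -/
  ν : ℝ → E2 → E2
  isOpen : ∀ t, IsOpen (Ω t)
  bounded : ∀ t, Bornology.IsBounded (Ω t)
  len_pos : ∀ t, 0 < len t
  len_cont : Continuous len
  periodic : ∀ t s, γ t (s + len t) = γ t s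
  image_eq : ∀ t, frontier (Ω t) = Set.range (γ t)
  contDiff_space : ∀ t, ContDiff ℝ 2 (γ t)
  arclength : ∀ t s, ‖deriv (γ t) s‖ = 1
  joint_cont : Continuous (Function.uncurry γ)
  velocity_cont : Continuous fun p : ℝ × ℝ => deriv (fun u => γ u p.2) p.1
  normal_unit : ∀ t s, ‖ν t (γ t s)‖ = 1
  normal_orth : ∀ t s, inner ℝ (ν t (γ t s)) (deriv (γ t) s) = (0 : ℝ)
  normal_outward : ∀ t s, ∀ᶠ ε in 𝓝[>] (0 : ℝ),
    γ t s + ε • ν t (γ t s) ∉ closure (Ω t)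

namespace SmoothMovingBoundary

/-- The line integral `∫_{Γ(τ)} f(y) ds_y` with respect to arc length. -/
def curveIntegral (B : SmoothMovingBoundary) (τ : ℝ) (f : E2 → ℝ) : ℝ :=
  ∫ s in Set.Ioc 0 (B.len τ), f (B.γ τ s)

/-- The single layer heat potential
`S[σ](x,t) = ∫₀ᵗ ∫_{Γ(τ)} G(x−y,t−τ) σ(y,τ) ds_y dτ`. -/
def singleLayer (B : SmoothMovingBoundary) (σ : E2 → ℝ → ℝ) (x : E2) (t : ℝ) : ℝ :=
  ∫ τ in Set.Ioc 0 t, B.curveIntegral τ fun y => heatKernel (x - y) (t - τ) * σ y τ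

/-- The space-time boundary `Γ_T = ∏_{0}^{T} Γ(t)` viewed as a subset of `ℝ² × ℝ`. -/
def spaceTimeBoundary (B : SmoothMovingBoundary) (T : ℝ) : Set (E2 × ℝ) :=
  {p | p.2 ∈ Set.Icc 0 T ∧ p.1 ∈ frontier (B.Ω p.2)}

end SmoothMovingBoundary

/-- The kernel `∂/∂ν_y G(x−y,s) = ⟪ν_y, (x−y)/(2s)⟫ G(x−y,s)` of the double
layer heat potential, where `n` is the (outward) unit normal at `y`. -/
def dlKernel (n : E2) (x y : E2) (s : ℝ) : ℝ :=
  ((inner ℝ n (x - y) : ℝ) / (2 * s)) * heatKernel (x - y) s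

/-- The double layer heat potential
`D[μ](x,t) = ∫₀ᵗ ∫_{Γ(τ)} (∂/∂ν_y) G(x−y,t−τ) μ(y,τ) ds_y dτ`. -/
def SmoothMovingBoundary.doubleLayer (B : SmoothMovingBoundary) (μ : E2 → ℝ → ℝ)
    (x : E2) (t : ℝ) : ℝ :=
  ∫ τ in Set.Ioc 0 t, B.curveIntegral τ fun y => dlKernel (B.ν τ y) x y (t - τ) * μ y τ

/-- A density which is continuous on the space-time boundary `Γ_T`. -/
def ContinuousDensity (B : SmoothMovingBoundary) (T : ℝ) (σ : E2 → ℝ → ℝ) : Prop :=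
  ContinuousOn (fun p : E2 × ℝ => σ p.1 p.2) (B.spaceTimeBoundary T)

/-- The Laplacian `Δf(x) = ∑ᵢ ∂²f/∂xᵢ²` of a function on the plane. -/
def laplacian2 (f : E2 → ℝ) (x : E2) : ℝ :=
  ∑ i : Fin 2, fderiv ℝ (fun y => fderiv ℝ f y (EuclideanSpace.single i (1 : ℝ))) x
    (EuclideanSpace.single i (1 : ℝ))

/-- The one-dimensional Hermite functions `h_n(x) = (−1)ⁿ (dⁿ/dxⁿ) e^{−x²}`. -/
def hermiteFun (n : ℕ) (x : ℝ) : ℝ :=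
  (-1 : ℝ) ^ n * (deriv^[n] fun y : ℝ => Real.exp (-y ^ 2)) x

/-- Two-dimensional Hermite functions `h_α(x) = h_{α₁}(x₁) h_{α₂}(x₂)`. -/
def hermiteFun2 (α : ℕ × ℕ) (x : E2) : ℝ :=
  hermiteFun α.1 (x 0) * hermiteFun α.2 (x 1)

/-- The exponential integral of order 3/2, `E_{3/2}(x) = ∫₁^∞ e^{−xt} t^{−3/2} dt`. -/
def expInt32 (x : ℝ) : ℝ :=
  ∫ u in Set.Ioi (1 : ℝ), Real.exp (-x * u) / u ^ ((3 : ℝ) / 2)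

/-- The complementary error function `erfc(x) = (2/√π) ∫ₓ^∞ e^{−t²} dt`. -/
def erfc (x : ℝ) : ℝ :=
  2 / Real.sqrt Real.pi * ∫ u in Set.Ioi x, Real.exp (-u ^ 2)


section AuxiliaryLemmas

open Real

lemma gauss_shift (c m : ℝ) : ∫ z : ℝ, Real.exp (-(c*(z-m)^2)) = Real.sqrt (π/c) := by
  rw [show (fun z : ℝ => Real.exp (-(c*(z-m)^2)))
      = fun z => (fun w => Real.exp (-(c*w^2))) (z - m) from rfl]
  rw [integral_sub_right_eq_self (fun w => Real.exp (-(c*w^2))) m]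
  simpa [neg_mul] using integral_gaussian c

lemma conv1d {a s : ℝ} (ha : 0 < a) (hs : 0 < s) (p q : ℝ) :
    ∫ z : ℝ, Real.exp (-((p - z)^2)/(4*a)) * Real.exp (-((z - q)^2)/(4*s))
      = Real.sqrt (4*π*a*s/(a+s)) * Real.exp (-((p - q)^2)/(4*(a+s))) := by
  have has : 0 < a + s := by linarith
  set c : ℝ := (a + s)/(4*a*s) with hc
  have hcpos : 0 < c := by positivity
  set m : ℝ := (s*p + a*q)/(a+s) with hm
  have key : ∀ z : ℝ, Real.exp (-((p - z)^2)/(4*a)) * Real.exp (-((z - q)^2)/(4*s))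
      = Real.exp (-((p - q)^2)/(4*(a+s))) * Real.exp (-(c*(z - m)^2)) := by
    intro z
    rw [← Real.exp_add, ← Real.exp_add]
    congr 1
    rw [hc, hm]
    field_simp
    ring
  simp_rw [key]
  rw [integral_const_mul, gauss_shift c m, mul_comm]
  congr 1
  rw [hc]
  congr 1
  field_simp

lemma norm_sq_E2 (v : E2) : ‖v‖^2 = (v 0)^2 + (v 1)^2 := by
  rw [EuclideanSpace.norm_eq, Real.sq_sqrt (by positivity)]
  simp [Fin.sum_univ_two, sq_abs]

lemma heat_conv {a s : ℝ} (ha : 0 < a) (hs : 0 < s) (x y : E2) :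
    ∫ z : E2, heatKernel (x - z) a * heatKernel (z - y) s = heatKernel (x - y) (a + s) := by
  have has : 0 < a + s := by linarith
  have hπ := Real.pi_pos
  have hpt : ∀ z : E2, heatKernel (x - z) a * heatKernel (z - y) s
      = (1/((4*π*a)*(4*π*s))) *
        ((Real.exp (-((x 0 - z 0)^2)/(4*a)) * Real.exp (-((z 0 - y 0)^2)/(4*s))) *
         (Real.exp (-((x 1 - z 1)^2)/(4*a)) * Real.exp (-((z 1 - y 1)^2)/(4*s)))) := by
    intro z
    simp only [heatKernel, norm_sq_E2]
    simp only [PiLp.sub_apply]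
    rw [show -((x 0 - z 0)^2 + (x 1 - z 1)^2)/(4*a)
        = -((x 0 - z 0)^2)/(4*a) + -((x 1 - z 1)^2)/(4*a) by ring,
      show -((z 0 - y 0)^2 + (z 1 - y 1)^2)/(4*s)
        = -((z 0 - y 0)^2)/(4*s) + -((z 1 - y 1)^2)/(4*s) by ring,
      Real.exp_add, Real.exp_add]
    ring
  simp_rw [hpt]
  have hmp := (EuclideanSpace.volume_preserving_symm_measurableEquiv_toLp (Fin 2)).symm
  rw [← hmp.integral_comp (MeasurableEquiv.measurableEmbedding _)]
  have hco : ∀ (v : Fin 2 → ℝ) (i : Fin 2),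
      ((MeasurableEquiv.toLp 2 (Fin 2 → ℝ)).symm.symm v) i = v i := fun _ _ => rfl
  simp_rw [hco]
  rw [integral_const_mul]
  have hsplit :
      ∫ v : Fin 2 → ℝ,
        (Real.exp (-((x 0 - v 0)^2)/(4*a)) * Real.exp (-((v 0 - y 0)^2)/(4*s))) *
        (Real.exp (-((x 1 - v 1)^2)/(4*a)) * Real.exp (-((v 1 - y 1)^2)/(4*s)))
      = (∫ w : ℝ, Real.exp (-((x 0 - w)^2)/(4*a)) * Real.exp (-((w - y 0)^2)/(4*s))) *
        (∫ w : ℝ, Real.exp (-((x 1 - w)^2)/(4*a)) * Real.exp (-((w - y 1)^2)/(4*s))) := by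
    have := MeasureTheory.integral_fintype_prod_eq_prod (𝕜 := ℝ) (ι := Fin 2) (μ := fun _ => volume)
      (f := fun i (w : ℝ) => Real.exp (-((x i - w)^2)/(4*a)) * Real.exp (-((w - y i)^2)/(4*s)))
    simpa [Fin.prod_univ_two, volume_pi] using this
  rw [hsplit, conv1d ha hs, conv1d ha hs]
  have hK : Real.sqrt (4*π*a*s/(a+s)) * Real.sqrt (4*π*a*s/(a+s)) = 4*π*a*s/(a+s) :=
    Real.mul_self_sqrt (by positivity)
  rw [show (Real.sqrt (4*π*a*s/(a+s)) * Real.exp (-((x 0 - y 0)^2)/(4*(a+s)))) *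
      (Real.sqrt (4*π*a*s/(a+s)) * Real.exp (-((x 1 - y 1)^2)/(4*(a+s))))
      = (Real.sqrt (4*π*a*s/(a+s)) * Real.sqrt (4*π*a*s/(a+s))) *
        (Real.exp (-((x 0 - y 0)^2)/(4*(a+s))) * Real.exp (-((x 1 - y 1)^2)/(4*(a+s)))) by ring,
    hK, ← Real.exp_add,
    show -((x 0 - y 0)^2)/(4*(a+s)) + -((x 1 - y 1)^2)/(4*(a+s))
      = -((x 0 - y 0)^2 + (x 1 - y 1)^2)/(4*(a+s)) by ring]
  simp only [heatKernel, norm_sq_E2, PiLp.sub_apply]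
  field_simp

lemma heatKernel_nonneg (w : E2) {r : ℝ} (hr : 0 < r) : 0 ≤ heatKernel w r := by
  unfold heatKernel; positivity

lemma heatKernel_le {r : ℝ} (hr : 0 < r) (w : E2) : heatKernel w r ≤ 1 / (4*π*r) := by
  unfold heatKernel
  have h1 : Real.exp (-‖w‖^2 / (4*r)) ≤ 1 := by
    rw [Real.exp_le_one_iff]
    have : (0:ℝ) ≤ ‖w‖^2 / (4*r) := by positivity
    rw [neg_div]; linarith
  have h2 : (0:ℝ) < 4*π*r := by positivity
  gcongr

lemma integrable_gauss2 {b : ℝ} (hb : 0 < b) :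
    Integrable (fun v : E2 => Real.exp (-(b*‖v‖^2))) := by
  have h := (GaussianFourier.integrable_cexp_neg_mul_sq_norm_add (V := E2)
    (b := (b:ℂ)) (by simpa using hb) 0 0).re
  refine h.congr (Filter.Eventually.of_forall fun v => ?_)
  have h2 : -(b:ℂ) * (‖v‖:ℂ)^2 = ((-(b*‖v‖^2) : ℝ) : ℂ) := by push_cast; ring
  simp only [zero_mul, add_zero, h2, RCLike.re_to_complex, Complex.exp_ofReal_re]

lemma continuous_heatKernel_left (r : ℝ) : Continuous fun w : E2 => heatKernel w r := by
  unfold heatKernel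
  exact (Real.continuous_exp.comp (((continuous_norm.pow 2).neg).div_const _)).div_const _

lemma integrable_heatKernel {r : ℝ} (hr : 0 < r) (x : E2) :
    Integrable (fun z : E2 => heatKernel (x - z) r) := by
  have h0 : Integrable (fun v : E2 => heatKernel v r) := by
    refine ((integrable_gauss2 (b := 1/(4*r)) (by positivity)).div_const (4*π*r)).congr
      (Filter.Eventually.of_forall fun v => ?_)
    unfold heatKernel
    simp only []
    rw [show -(1/(4*r)*‖v‖^2) = -‖v‖^2/(4*r) by ring]
  exact h0.comp_sub_left x

lemma integrable_heat_mul {a s : ℝ} (ha : 0 < a) (hs : 0 < s) (x y : E2) :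
    Integrable (fun z : E2 => heatKernel (x - z) a * heatKernel (z - y) s) := by
  refine Integrable.mono' ((integrable_heatKernel ha x).mul_const (1/(4*π*s))) ?_ ?_
  · exact ((continuous_heatKernel_left a).comp
      (continuous_const.sub continuous_id)).aestronglyMeasurable.mul
      (((continuous_heatKernel_left s).comp
        (continuous_id.sub continuous_const)).aestronglyMeasurable)
  · refine Filter.Eventually.of_forall fun z => ?_
    rw [Real.norm_eq_abs,
      abs_of_nonneg (mul_nonneg (heatKernel_nonneg _ ha) (heatKernel_nonneg _ hs))]
    exact mul_le_mul_of_nonneg_left (heatKernel_le hs _) (heatKernel_nonneg _ ha)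

end AuxiliaryLemmas

theorem singleLayer_history_semigroup
    (T : ℝ) (B : SmoothMovingBoundary)
    (σ : E2 → ℝ → ℝ) (hσ : ContinuousDensity B T σ)
    (δ t : ℝ) (hδ : 0 < δ) (ht : δ ≤ t) (htT : t ≤ T) :
    ∀ x : E2,
      (∫ τ in Set.Ioc 0 t, B.curveIntegral τ fun y =>
        heatKernel (x - y) (t + δ - τ) * σ y τ) =
      ∫ z : E2, heatKernel (x - z) δ * B.singleLayer σ z t := by
  intro x
  have hπ := Real.pi_pos
  have hT : (0:ℝ) < T := lt_of_lt_of_le hδ (le_trans ht htT)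
  -- the composed density and its continuity
  set φ : ℝ → ℝ → ℝ := fun τ s => σ (B.γ τ s) τ with hφdef
  have hψ : Continuous fun p : ℝ × ℝ => (B.γ p.1 p.2, p.1) :=
    (B.joint_cont).prodMk continuous_fst
  have hmaps : Set.MapsTo (fun p : ℝ × ℝ => (B.γ p.1 p.2, p.1))
      (Set.Icc 0 T ×ˢ (Set.univ : Set ℝ)) (B.spaceTimeBoundary T) := by
    rintro ⟨τ, s⟩ ⟨hτ, -⟩
    refine ⟨hτ, ?_⟩
    rw [B.image_eq]
    exact ⟨s, rfl⟩
  have hφcont : ContinuousOn (fun p : ℝ × ℝ => φ p.1 p.2)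
      (Set.Icc 0 T ×ˢ (Set.univ : Set ℝ)) := hσ.comp hψ.continuousOn hmaps
  -- bound on the lengths
  obtain ⟨C, hC⟩ := (isCompact_Icc (a := (0:ℝ)) (b := T)).exists_bound_of_continuousOn
    B.len_cont.continuousOn
  have hlen_le : ∀ τ ∈ Set.Icc (0:ℝ) T, B.len τ ≤ C := fun τ hτ =>
    (le_abs_self _).trans (by simpa [Real.norm_eq_abs] using hC τ hτ)
  -- bound on the density
  obtain ⟨M0, hM0⟩ := ((isCompact_Icc (a := (0:ℝ)) (b := T)).prod
    (isCompact_Icc (a := (0:ℝ)) (b := C))).exists_bound_of_continuousOn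
    (hφcont.mono (Set.prod_mono subset_rfl (Set.subset_univ _)))
  -- measures and the space-time region
  set μτ : Measure ℝ := volume.restrict (Set.Ioo 0 t) with hμτ
  set μ₂ : Measure (ℝ × ℝ) := μτ.prod volume with hμ₂
  set A : Set (ℝ × ℝ) := {p | p.2 ∈ Set.Ioc 0 (B.len p.1)} with hAdef
  have hA : MeasurableSet A := by
    have hset : A = {p : ℝ × ℝ | 0 < p.2} ∩ {p : ℝ × ℝ | p.2 ≤ B.len p.1} := by
      ext p; simp [hAdef, Set.mem_Ioc]
    rw [hset]
    exact (measurableSet_lt measurable_const measurable_snd).inter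
      (measurableSet_le measurable_snd (B.len_cont.measurable.comp measurable_fst))
  -- the global integrand
  set g : (ℝ × ℝ) × E2 → ℝ := fun p =>
    A.indicator (fun _ => (1:ℝ)) p.1 *
      (heatKernel (x - p.2) δ *
        (heatKernel (p.2 - B.γ p.1.1 p.1.2) (t - p.1.1) * φ p.1.1 p.1.2)) with hgdef
  -- measurability of g
  have hind_m : Measurable fun p : (ℝ × ℝ) × E2 => A.indicator (fun _ => (1:ℝ)) p.1 :=
    (measurable_const.indicator hA).comp measurable_fst
  have hHδ_c : Continuous fun p : (ℝ × ℝ) × E2 => heatKernel (x - p.2) δ :=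
    (continuous_heatKernel_left δ).comp (continuous_const.sub continuous_snd)
  have hw_c : Continuous fun p : (ℝ × ℝ) × E2 => p.2 - Function.uncurry B.γ p.1 :=
    continuous_snd.sub (B.joint_cont.comp continuous_fst)
  have hHt_m : Measurable fun p : (ℝ × ℝ) × E2 =>
      heatKernel (p.2 - B.γ p.1.1 p.1.2) (t - p.1.1) := by
    unfold heatKernel
    apply Measurable.div
    · apply Measurable.exp
      exact ((hw_c.norm.pow 2).neg.measurable).div
        ((continuous_const.mul (continuous_const.sub continuous_fst.fst)).measurable)
    · exact (continuous_const.mul (continuous_const.sub continuous_fst.fst)).measurable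
  have e1 : μ₂ = ((volume : Measure ℝ).prod volume).restrict
      (Set.Ioo 0 t ×ˢ (Set.univ : Set ℝ)) := by
    rw [hμ₂, hμτ, ← Measure.prod_restrict, Measure.restrict_univ]
  have hφae2 : AEStronglyMeasurable (fun p : ℝ × ℝ => φ p.1 p.2) μ₂ := by
    have h1 : AEStronglyMeasurable (fun p : ℝ × ℝ => φ p.1 p.2)
        (((volume : Measure ℝ).prod volume).restrict (Set.Icc 0 T ×ˢ (Set.univ : Set ℝ))) :=
      hφcont.aestronglyMeasurable (measurableSet_Icc.prod MeasurableSet.univ)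
    refine h1.mono_measure ?_
    rw [e1]
    refine Measure.restrict_mono (Set.prod_mono ?_ subset_rfl) le_rfl
    exact fun τ hτ => ⟨le_of_lt hτ.1, le_trans (le_of_lt hτ.2) htT⟩
  have hφP : AEStronglyMeasurable (fun p : (ℝ × ℝ) × E2 => φ p.1.1 p.1.2)
      (μ₂.prod volume) :=
    hφae2.comp_quasiMeasurePreserving Measure.quasiMeasurePreserving_fst
  have hgm : AEStronglyMeasurable g (μ₂.prod volume) := by
    rw [hgdef]
    exact hind_m.aestronglyMeasurable.mul
      (hHδ_c.aestronglyMeasurable.mul (hHt_m.aestronglyMeasurable.mul hφP))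
  -- finiteness of the region
  have hAfin : μ₂ A < ⊤ := by
    rw [hμ₂, Measure.prod_apply hA]
    have hbound : ∀ τ ∈ Set.Ioo (0:ℝ) t, volume (Prod.mk τ ⁻¹' A) ≤ ENNReal.ofReal C := by
      intro τ hτ
      have hpre : Prod.mk τ ⁻¹' A = Set.Ioc 0 (B.len τ) := rfl
      rw [hpre, Real.volume_Ioc]
      exact ENNReal.ofReal_le_ofReal (by
        simpa using hlen_le τ ⟨le_of_lt hτ.1, le_trans (le_of_lt hτ.2) htT⟩)
    calc ∫⁻ τ in Set.Ioo 0 t, volume (Prod.mk τ ⁻¹' A)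
        ≤ ∫⁻ _ in Set.Ioo 0 t, ENNReal.ofReal C :=
          setLIntegral_mono_ae' measurableSet_Ioo (Filter.Eventually.of_forall hbound)
      _ = ENNReal.ofReal C * volume (Set.Ioo 0 t) := setLIntegral_const _ _
      _ < ⊤ := ENNReal.mul_lt_top ENNReal.ofReal_lt_top (by
          rw [Real.volume_Ioo]; exact ENNReal.ofReal_lt_top)
  -- almost-every point has first coordinate in (0, t)
  have hae_fst : ∀ᵐ p ∂μ₂, p.1 ∈ Set.Ioo (0:ℝ) t := by
    have h : ∀ᵐ p ∂μ₂, p ∈ Set.Ioo 0 t ×ˢ (Set.univ : Set ℝ) := by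
      rw [e1]
      exact ae_restrict_mem (measurableSet_Ioo.prod MeasurableSet.univ)
    exact h.mono fun p hp => hp.1
  -- section integrability in z
  have hsect : ∀ᵐ p ∂μ₂, Integrable (fun z => g (p, z)) volume := by
    filter_upwards [hae_fst] with p hp
    have hts : 0 < t - p.1 := sub_pos.2 hp.2
    have hint := (integrable_heat_mul hδ hts x (B.γ p.1 p.2)).const_mul
      (A.indicator (fun _ => (1:ℝ)) p * φ p.1 p.2)
    refine hint.congr (Filter.Eventually.of_forall fun z => ?_)
    simp only [hgdef]
    ring
  -- integrability of the z-norm-integral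
  have hG1 : Integrable (fun q : ℝ × ℝ => A.indicator (fun _ => M0 / (4*Real.pi*δ)) q) μ₂ :=
    (integrable_indicator_iff hA).2 (integrableOn_const hAfin.ne)
  have hnormint : Integrable (fun p : ℝ × ℝ => ∫ z, ‖g (p, z)‖) μ₂ := by
    refine Integrable.mono' hG1 (hgm.norm.integral_prod_right') ?_
    filter_upwards [hae_fst] with p hp
    have hts : 0 < t - p.1 := sub_pos.2 hp.2
    by_cases hpA : p ∈ A
    · have h1 : ∀ z : E2, ‖g (p, z)‖
          = |φ p.1 p.2| * (heatKernel (x - z) δ * heatKernel (z - B.γ p.1 p.2) (t - p.1)) := by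
        intro z
        simp only [hgdef, Set.indicator_of_mem hpA, one_mul, Real.norm_eq_abs, abs_mul,
          abs_of_nonneg (heatKernel_nonneg _ hδ), abs_of_nonneg (heatKernel_nonneg _ hts)]
        ring
      have hb1 : |φ p.1 p.2| ≤ M0 := by
        have hmem : (p.1, p.2) ∈ Set.Icc (0:ℝ) T ×ˢ Set.Icc (0:ℝ) C := by
          constructor
          · exact ⟨le_of_lt hp.1, le_trans (le_of_lt hp.2) htT⟩
          · exact ⟨le_of_lt hpA.1, le_trans hpA.2
              (hlen_le p.1 ⟨le_of_lt hp.1, le_trans (le_of_lt hp.2) htT⟩)⟩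
        simpa [Real.norm_eq_abs] using hM0 (p.1, p.2) hmem
      calc ‖∫ z, ‖g (p, z)‖‖ = ∫ z, ‖g (p, z)‖ := by
            rw [Real.norm_eq_abs, abs_of_nonneg (integral_nonneg fun z => norm_nonneg _)]
        _ = |φ p.1 p.2| *
              ∫ z, heatKernel (x - z) δ * heatKernel (z - B.γ p.1 p.2) (t - p.1) := by
            simp_rw [h1]; exact integral_const_mul _ _
        _ = |φ p.1 p.2| * heatKernel (x - B.γ p.1 p.2) (δ + (t - p.1)) := by
            rw [heat_conv hδ hts]
        _ ≤ M0 * (1/(4*Real.pi*δ)) := by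
            have hb2 : heatKernel (x - B.γ p.1 p.2) (δ + (t - p.1)) ≤ 1/(4*Real.pi*δ) := by
              refine le_trans (heatKernel_le (by linarith) _) ?_
              have h2 : 4*Real.pi*δ ≤ 4*Real.pi*(δ + (t - p.1)) := by nlinarith
              exact one_div_le_one_div_of_le (by positivity) h2
            exact mul_le_mul hb1 hb2 (heatKernel_nonneg _ (by linarith))
              (le_trans (abs_nonneg _) hb1)
        _ = A.indicator (fun _ => M0/(4*Real.pi*δ)) p := by
            rw [Set.indicator_of_mem hpA]; ring
    · have h0 : ∀ z : E2, g (p, z) = 0 := fun z => by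
        simp [hgdef, Set.indicator_of_notMem hpA]
      simp [h0, Set.indicator_of_notMem hpA]
  have hg_int : Integrable g (μ₂.prod volume) := (integrable_prod_iff hgm).2 ⟨hsect, hnormint⟩
  -- fibrewise identities
  have hs_int : ∀ (τ : ℝ) (z : E2), (∫ s, g ((τ, s), z))
      = heatKernel (x - z) δ *
          B.curveIntegral τ (fun y => heatKernel (z - y) (t - τ) * σ y τ) := by
    intro τ z
    have hs_ind : (fun s => g ((τ, s), z))
        = fun s => Set.indicator (Set.Ioc 0 (B.len τ))
            (fun s' => heatKernel (x - z) δ *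
              (heatKernel (z - B.γ τ s') (t - τ) * φ τ s')) s := by
      funext s
      by_cases hs : s ∈ Set.Ioc 0 (B.len τ)
      · rw [Set.indicator_of_mem hs]
        simp only [hgdef, Set.indicator_of_mem (show ((τ, s)) ∈ A from hs), one_mul]
      · rw [Set.indicator_of_notMem hs]
        simp only [hgdef, Set.indicator_of_notMem (show ((τ, s)) ∉ A from hs), zero_mul]
    rw [hs_ind, integral_indicator measurableSet_Ioc, integral_const_mul]
    rfl
  have hz_int : ∀ τ ∈ Set.Ioo (0:ℝ) t, ∀ s : ℝ, (∫ z, g ((τ, s), z))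
      = Set.indicator (Set.Ioc 0 (B.len τ))
          (fun s' => heatKernel (x - B.γ τ s') (t + δ - τ) * φ τ s') s := by
    intro τ hτ s
    have hts : 0 < t - τ := sub_pos.2 hτ.2
    have e2 : (fun z : E2 => g ((τ, s), z)) = fun z =>
        (A.indicator (fun _ => (1:ℝ)) (τ, s) * φ τ s) *
          (heatKernel (x - z) δ * heatKernel (z - B.γ τ s) (t - τ)) := by
      funext z; simp only [hgdef]; ring
    rw [e2, integral_const_mul, heat_conv hδ hts, show δ + (t - τ) = t + δ - τ by ring]
    by_cases hs : s ∈ Set.Ioc 0 (B.len τ)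
    · rw [Set.indicator_of_mem hs, Set.indicator_of_mem (show ((τ, s)) ∈ A from hs)]; ring
    · rw [Set.indicator_of_notMem hs,
        Set.indicator_of_notMem (show ((τ, s)) ∉ A from hs)]; ring
  have claim1 : ∀ τ ∈ Set.Ioo (0:ℝ) t,
      (∫ s, ∫ z, g ((τ, s), z)) =
        B.curveIntegral τ (fun y => heatKernel (x - y) (t + δ - τ) * σ y τ) := by
    intro τ hτ
    calc (∫ s, ∫ z, g ((τ, s), z))
        = ∫ s, Set.indicator (Set.Ioc 0 (B.len τ))
            (fun s' => heatKernel (x - B.γ τ s') (t + δ - τ) * φ τ s') s :=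
          integral_congr_ae (Filter.Eventually.of_forall fun s => hz_int τ hτ s)
      _ = ∫ s in Set.Ioc 0 (B.len τ), heatKernel (x - B.γ τ s) (t + δ - τ) * φ τ s :=
          integral_indicator measurableSet_Ioc
      _ = B.curveIntegral τ (fun y => heatKernel (x - y) (t + δ - τ) * σ y τ) := rfl
  -- main computation
  calc (∫ τ in Set.Ioc 0 t, B.curveIntegral τ fun y => heatKernel (x - y) (t + δ - τ) * σ y τ)
      = ∫ τ in Set.Ioo 0 t, B.curveIntegral τ fun y =>
          heatKernel (x - y) (t + δ - τ) * σ y τ := integral_Ioc_eq_integral_Ioo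
    _ = ∫ τ in Set.Ioo 0 t, ∫ s, ∫ z, g ((τ, s), z) :=
        setIntegral_congr_fun measurableSet_Ioo (fun τ hτ => (claim1 τ hτ).symm)
    _ = ∫ p, (∫ z, g (p, z)) ∂μ₂ :=
        (MeasureTheory.integral_prod _ hg_int.integral_prod_left).symm
    _ = ∫ q, g q ∂(μ₂.prod volume) := (MeasureTheory.integral_prod g hg_int).symm
    _ = ∫ z, ∫ p, g (p, z) ∂μ₂ := MeasureTheory.integral_prod_symm g hg_int
    _ = ∫ z, heatKernel (x - z) δ * B.singleLayer σ z t := by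
        refine integral_congr_ae ?_
        filter_upwards [hg_int.prod_left_ae] with z hz
        calc (∫ p, g (p, z) ∂μ₂)
            = ∫ τ in Set.Ioo 0 t, ∫ s, g ((τ, s), z) := MeasureTheory.integral_prod _ hz
          _ = ∫ τ in Set.Ioo 0 t, heatKernel (x - z) δ *
                B.curveIntegral τ (fun y => heatKernel (z - y) (t - τ) * σ y τ) :=
              integral_congr_ae (Filter.Eventually.of_forall fun τ => hs_int τ z)
          _ = heatKernel (x - z) δ * ∫ τ in Set.Ioo 0 t,
                B.curveIntegral τ (fun y => heatKernel (z - y) (t - τ) * σ y τ) :=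
              integral_const_mul _ _
          _ = heatKernel (x - z) δ * B.singleLayer σ z t := by
              rw [SmoothMovingBoundary.singleLayer, ← integral_Ioc_eq_integral_Ioo]


end
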